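/- Let {X(λ)} be a *-resolution of the identity with sup‖X(λ)‖ = 1, and let Δ₁, …, Δₙ be pairwise disjoint half-open intervals of ℝ. Then for every η ∈ H, ∑ₖ ‖X(Δₖ)η‖² ≤ ‖η‖², where X((a,b]) := X(b) − X(a). -/

import Mathlib

open Filter Topology
open scoped InnerProductSpace

/-- If `v` is fixed by a contractive idempotent-like map and `w` is killed, then `v ⊥ w`. -/
lemma aux_orth_of_contraction {H : Type*} [NormedAddCommGroup H] [InnerProductSpace ℂ H]
    (P : H →L[ℂ] H) (hn : ‖P‖ ≤ 1) (v w : H) (hv : P v = v) (hw : P w = 0) :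
    (⟪v, w⟫_ℂ) = 0 := by
  by_cases hw0 : w = 0
  · simp [hw0]
  have hwpos : (0 : ℝ) < ‖w‖ ^ 2 := by
    have := norm_pos_iff.mpr hw0
    positivity
  set c : ℂ := ⟪v, w⟫_ℂ with hc
  have key : ∀ z : ℂ, 0 ≤ 2 * (z * c).re + ‖z‖ ^ 2 * ‖w‖ ^ 2 := by
    intro z
    have h1 : P (v + z • w) = v := by
      rw [map_add, hv, map_smul, hw, smul_zero, add_zero]
    have h2 : ‖v‖ ≤ ‖v + z • w‖ := by
      calc ‖v‖ = ‖P (v + z • w)‖ := by rw [h1]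
        _ ≤ ‖P‖ * ‖v + z • w‖ := P.le_opNorm _
        _ ≤ 1 * ‖v + z • w‖ := mul_le_mul_of_nonneg_right hn (norm_nonneg _)
        _ = ‖v + z • w‖ := one_mul _
    have h3 : ‖v‖ ^ 2 ≤ ‖v + z • w‖ ^ 2 := pow_le_pow_left₀ (norm_nonneg _) h2 2
    have h4 := norm_add_sq (𝕜 := ℂ) v (z • w)
    have h5 : (⟪v, z • w⟫_ℂ) = z * c := by rw [inner_smul_right]
    have h6 : ‖z • w‖ ^ 2 = ‖z‖ ^ 2 * ‖w‖ ^ 2 := by rw [norm_smul, mul_pow]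
    rw [h5, h6] at h4
    simp only [RCLike.re_to_complex] at h4
    rw [h4] at h3
    linarith
  by_contra hne
  have hcpos : (0 : ℝ) < ‖c‖ ^ 2 := by
    have : c ≠ 0 := hne
    have := norm_pos_iff.mpr this
    positivity
  set t : ℝ := 1 / ‖w‖ ^ 2 with ht
  have htpos : 0 < t := by positivity
  have h := key (-(t : ℂ) * (starRingEnd ℂ) c)
  have habs : ‖c‖ ^ 2 = c.re ^ 2 + c.im ^ 2 := by
    rw [Complex.sq_norm, Complex.normSq_apply]; ring
  have hzc : ((-(t : ℂ) * (starRingEnd ℂ) c) * c).re = -(t * ‖c‖ ^ 2) := by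
    rw [habs]
    simp [Complex.mul_re, Complex.mul_im]
    ring
  have hznorm : ‖(-(t : ℂ) * (starRingEnd ℂ) c)‖ ^ 2 = t ^ 2 * ‖c‖ ^ 2 := by
    rw [norm_mul, mul_pow, norm_neg, Complex.norm_real, RCLike.norm_conj,
      Real.norm_eq_abs, sq_abs]
  rw [hzc, hznorm] at h
  have hw2 : t * ‖w‖ ^ 2 = 1 := by
    rw [ht, one_div, inv_mul_cancel₀ (ne_of_gt hwpos)]
  have e : t ^ 2 * ‖c‖ ^ 2 * ‖w‖ ^ 2 = t * ‖c‖ ^ 2 := by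
    calc t ^ 2 * ‖c‖ ^ 2 * ‖w‖ ^ 2 = (t * ‖c‖ ^ 2) * (t * ‖w‖ ^ 2) := by ring
      _ = t * ‖c‖ ^ 2 := by rw [hw2, mul_one]
  rw [e] at h
  have := mul_pos htpos hcpos
  linarith

/-- A contractive idempotent on a complex Hilbert space is symmetric. -/
lemma aux_symm_of_contraction {H : Type*} [NormedAddCommGroup H] [InnerProductSpace ℂ H]
    (P : H →L[ℂ] H) (hn : ‖P‖ ≤ 1) (hP : ∀ x, P (P x) = P x) (x y : H) :
    (⟪P x, y⟫_ℂ) = ⟪x, P y⟫_ℂ := by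
  have h1 : (⟪P x, y - P y⟫_ℂ) = 0 :=
    aux_orth_of_contraction P hn (P x) (y - P y) (hP x) (by rw [map_sub, hP, sub_self])
  have h2 : (⟪P y, x - P x⟫_ℂ) = 0 :=
    aux_orth_of_contraction P hn (P y) (x - P x) (hP y) (by rw [map_sub, hP, sub_self])
  have h2' : (⟪x - P x, P y⟫_ℂ) = 0 := by
    rw [← inner_conj_symm, h2, map_zero]
  have e1 : (⟪P x, y⟫_ℂ) = ⟪P x, P y⟫_ℂ := by
    have := inner_sub_right (𝕜 := ℂ) (P x) y (P y)
    rw [h1] at this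
    linear_combination -this
  have e2 : (⟪x, P y⟫_ℂ) = ⟪P x, P y⟫_ℂ := by
    have := inner_sub_left (𝕜 := ℂ) x (P x) (P y)
    rw [h2'] at this
    linear_combination -this
  rw [e1, e2]

/-- For a *-resolution of the identity with `sup‖X(λ)‖ = 1` and pairwise disjoint half-open
intervals `Δₖ = (aₖ, bₖ]`, one has `∑ₖ ‖X(Δₖ)η‖² ≤ ‖η‖²` where `X((a,b]) = X(b) − X(a)`. -/
theorem star_resolution_disjoint_intervals_sum
    {H : Type*} [NormedAddCommGroup H] [InnerProductSpace ℂ H] [CompleteSpace H]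
    (X : ℝ → H →L[ℂ] H)
    (hnorm : (⨆ l : ℝ, ‖X l‖) = 1)
    (hmul : ∀ l m : ℝ, l < m → (X l).comp (X m) = X l ∧ (X m).comp (X l) = X l)
    (hbot : ∀ ξ : H, Tendsto (fun l => X l ξ) atBot (𝓝 0))
    (htop : ∀ ξ : H, Tendsto (fun l => X l ξ) atTop (𝓝 ξ))
    (hrc : ∀ (l : ℝ) (ξ : H), Tendsto (fun m => X m ξ) (𝓝[>] l) (𝓝 (X l ξ)))
    (hbotS : ∀ ξ : H, Tendsto (fun l => ContinuousLinearMap.adjoint (X l) ξ) atBot (𝓝 0))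
    (htopS : ∀ ξ : H, Tendsto (fun l => ContinuousLinearMap.adjoint (X l) ξ) atTop (𝓝 ξ))
    (hrcS : ∀ (l : ℝ) (ξ : H), Tendsto (fun m => ContinuousLinearMap.adjoint (X m) ξ)
      (𝓝[>] l) (𝓝 (ContinuousLinearMap.adjoint (X l) ξ)))
    (F : ℝ → H →L[ℂ] H)
    (hF : ∀ l, F l = (ContinuousLinearMap.adjoint (X l)).comp (X l))
    (n : ℕ) (a b : Fin n → ℝ) (hab : ∀ k, a k < b k)
    (hdisj : ∀ k m : Fin n, k ≠ m → Disjoint (Set.Ioc (a k) (b k)) (Set.Ioc (a m) (b m))) :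
    ∀ η : H, (∑ k : Fin n, ‖(X (b k) - X (a k)) η‖ ^ 2) ≤ ‖η‖ ^ 2 := by
  intro η
  -- Each X l is a contraction.
  have hbdd : BddAbove (Set.range fun l => ‖X l‖) := by
    by_contra hb
    rw [Real.iSup_of_not_bddAbove hb] at hnorm
    norm_num at hnorm
  have hle : ∀ l, ‖X l‖ ≤ 1 := by
    intro l
    calc ‖X l‖ ≤ ⨆ l : ℝ, ‖X l‖ := le_ciSup hbdd l
      _ = 1 := hnorm
  -- Each X l is idempotent (by right continuity).
  have hP2 : ∀ l ξ, X l (X l ξ) = X l ξ := by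
    intro l ξ
    have h1 : Tendsto (fun m => X l (X m ξ)) (𝓝[>] l) (𝓝 (X l (X l ξ))) :=
      ((X l).continuous.tendsto _).comp (hrc l ξ)
    have h2 : Tendsto (fun m => X l (X m ξ)) (𝓝[>] l) (𝓝 (X l ξ)) := by
      apply Tendsto.congr' ?_ tendsto_const_nhds
      filter_upwards [self_mem_nhdsWithin] with m hm
      exact (DFunLike.congr_fun (hmul l m hm).1 ξ).symm
    exact tendsto_nhds_unique h1 h2
  -- Products for `l ≤ m`.
  have hlm : ∀ l m : ℝ, l ≤ m → ∀ ξ, X l (X m ξ) = X l ξ ∧ X m (X l ξ) = X l ξ := by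
    intro l m hlem ξ
    rcases lt_or_eq_of_le hlem with h | h
    · exact ⟨DFunLike.congr_fun (hmul l m h).1 ξ, DFunLike.congr_fun (hmul l m h).2 ξ⟩
    · subst h
      exact ⟨hP2 l ξ, hP2 l ξ⟩
  -- Each X l is symmetric.
  have hsa : ∀ l (x y : H), (⟪X l x, y⟫_ℂ) = ⟪x, X l y⟫_ℂ := fun l =>
    aux_symm_of_contraction (X l) (hle l) (hP2 l)
  set Q : Fin n → H →L[ℂ] H := fun k => X (b k) - X (a k) with hQ
  have hQapp : ∀ k (ξ : H), Q k ξ = X (b k) ξ - X (a k) ξ := fun k ξ => rfl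
  -- Q is symmetric.
  have hQsa : ∀ k (x y : H), (⟪Q k x, y⟫_ℂ) = ⟪x, Q k y⟫_ℂ := by
    intro k x y
    rw [hQapp, hQapp, inner_sub_left, inner_sub_right, hsa, hsa]
  -- Q k ∘ Q m = 0 for k ≠ m, and Q k idempotent.
  have hQmul : ∀ k m : Fin n, ∀ ξ : H,
      Q k (Q m ξ) = if k = m then Q k ξ else 0 := by
    intro k m ξ
    by_cases hkm : k = m
    · subst hkm
      rw [if_pos rfl]
      simp only [hQapp, map_sub]
      rw [(hlm (a k) (b k) (hab k).le _).2, (hlm (a k) (b k) (hab k).le _).1,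
        hP2, hP2]
      abel
    · rw [if_neg hkm]
      have hd := hdisj k m hkm
      rw [Set.Ioc_disjoint_Ioc] at hd
      have hcase : b k ≤ a m ∨ b m ≤ a k := by
        rcases min_le_iff.mp hd with h | h
        · rcases le_max_iff.mp h with h' | h'
          · exact absurd h' (not_le.mpr (hab k))
          · exact Or.inl h'
        · rcases le_max_iff.mp h with h' | h'
          · exact Or.inr h'
          · exact absurd h' (not_le.mpr (hab m))
      simp only [hQapp, map_sub]
      rcases hcase with h | h
      · -- a k < b k ≤ a m < b m
        rw [(hlm (b k) (b m) (h.trans (hab m).le) _).1,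
          (hlm (b k) (a m) h _).1,
          (hlm (a k) (b m) ((hab k).le.trans (h.trans (hab m).le)) _).1,
          (hlm (a k) (a m) ((hab k).le.trans h) _).1]
        abel
      · -- a m < b m ≤ a k < b k
        rw [(hlm (b m) (b k) (h.trans (hab k).le) _).2,
          (hlm (a m) (b k) ((hab m).le.trans (h.trans (hab k).le)) _).2,
          (hlm (b m) (a k) h _).2,
          (hlm (a m) (a k) ((hab m).le.trans h) _).2]
        abel
  -- The sum vector.
  set u : H := ∑ k : Fin n, Q k η with hu
  have hQu : ∀ k, Q k u = Q k η := by
    intro k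
    rw [hu, map_sum]
    rw [Finset.sum_eq_single k]
    · rw [hQmul, if_pos rfl]
    · intro m _ hm
      rw [hQmul, if_neg (Ne.symm hm)]
    · intro h
      exact absurd (Finset.mem_univ k) h
  -- ⟪η, u⟫ equals the sum of squared norms.
  have hinner : (⟪η, u⟫_ℂ) = ∑ k : Fin n, (‖Q k η‖ ^ 2 : ℝ) := by
    rw [hu, inner_sum]
    push_cast
    refine Finset.sum_congr rfl fun k _ => ?_
    have h1 : (⟪η, Q k η⟫_ℂ) = ⟪Q k η, Q k η⟫_ℂ := by
      calc (⟪η, Q k η⟫_ℂ) = ⟪η, Q k (Q k η)⟫_ℂ := by rw [hQmul, if_pos rfl]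
        _ = ⟪Q k η, Q k η⟫_ℂ := (hQsa k η (Q k η)).symm
    rw [h1, inner_self_eq_norm_sq_to_K]
    norm_cast
  -- ⟪u, u⟫ = ⟪η, u⟫
  have huu : (⟪u, u⟫_ℂ) = ⟪η, u⟫_ℂ := by
    conv_lhs => rw [hu]
    rw [sum_inner]
    conv_rhs => rw [hu, inner_sum]
    refine Finset.sum_congr rfl fun k _ => ?_
    rw [hQsa k η u, hQu]
  have hsum_eq : (∑ k : Fin n, ‖Q k η‖ ^ 2) = ‖u‖ ^ 2 := by
    have h1 : (⟪u, u⟫_ℂ) = ((‖u‖ : ℂ)) ^ 2 := inner_self_eq_norm_sq_to_K u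
    have h2 : (((∑ k : Fin n, ‖Q k η‖ ^ 2 : ℝ) : ℂ)) = ((‖u‖ : ℂ)) ^ 2 := by
      rw [← hinner, ← huu, h1]
    exact_mod_cast h2
  -- ‖u‖ ≤ ‖η‖
  have hub : ‖u‖ ^ 2 ≤ ‖η‖ * ‖u‖ := by
    have h1 : (‖u‖ ^ 2 : ℝ) = (⟪u, u⟫_ℂ).re := by
      rw [← inner_self_eq_norm_sq (𝕜 := ℂ)]; rfl
    rw [h1, huu]
    calc (⟪η, u⟫_ℂ).re ≤ ‖(⟪η, u⟫_ℂ)‖ := Complex.re_le_norm _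
      _ ≤ ‖η‖ * ‖u‖ := norm_inner_le_norm η u
  have hu_le : ‖u‖ ≤ ‖η‖ := by
    rcases eq_or_lt_of_le (norm_nonneg u) with h | h
    · rw [← h]; exact norm_nonneg η
    · nlinarith
  calc (∑ k : Fin n, ‖(X (b k) - X (a k)) η‖ ^ 2) = ‖u‖ ^ 2 := hsum_eq
    _ ≤ ‖η‖ ^ 2 := by nlinarith
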